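/- Let κ be an infinite cardinal and let K be a connected compact Hausdorff space of weight at most κ such that every connected compact Hausdorff space of weight at most κ is a continuous image of K. Then every real Banach space of density character at most κ admits a linear isometric embedding into the Banach space C(K, ℝ) of continuous real-valued functions on K with the supremum norm. -/

import Mathlib

open Cardinal

/-- The weight of a topological space: the smallest cardinality of a base for its topology. -/
noncomputable def topWeight (X : Type u) [TopologicalSpace X] : Cardinal.{u} :=
  sInf { c | ∃ B : Set (Set X), TopologicalSpace.IsTopologicalBasis B ∧ #B = c }

/-- The density character of a topological space: the smallest cardinality of a dense subset. -/
noncomputable def densityChar (X : Type u) [TopologicalSpace X] : Cardinal.{u} :=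
  sInf { c | ∃ s : Set X, Dense s ∧ #s = c }

open TopologicalSpace Set in
lemma topWeight_le_of_basis {X : Type v} [TopologicalSpace X] {B : Set (Set X)}
    (h : IsTopologicalBasis B) : topWeight X ≤ #B :=
  csInf_le' ⟨B, h, rfl⟩

open TopologicalSpace Set in
lemma exists_basis_eq_topWeight (X : Type v) [TopologicalSpace X] :
    ∃ B : Set (Set X), IsTopologicalBasis B ∧ #B = topWeight X := by
  have hne : { c | ∃ B : Set (Set X), IsTopologicalBasis B ∧ #B = c }.Nonempty :=
    ⟨_, {U | IsOpen U}, isTopologicalBasis_opens, rfl⟩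
  exact csInf_mem hne

open TopologicalSpace Set in
lemma topWeight_le_of_isEmbedding {Y Z : Type v} [TopologicalSpace Y] [TopologicalSpace Z]
    {e : Y → Z} (he : Topology.IsInducing e) : topWeight Y ≤ topWeight Z := by
  obtain ⟨B, hB, hcard⟩ := exists_basis_eq_topWeight Z
  calc topWeight Y ≤ #((Set.preimage e) '' B) := topWeight_le_of_basis (hB.isInducing he)
    _ ≤ #B := mk_image_le
    _ = topWeight Z := hcard

open TopologicalSpace Set in
lemma topWeight_pi_real (ι : Type v) : topWeight (ι → ℝ) ≤ max ℵ₀ #ι := by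
  obtain ⟨b, hbc, -, hb⟩ := exists_countable_basis ℝ
  haveI : Countable ↥b := hbc.to_subtype
  have hbasis := isTopologicalBasis_pi (fun _ : ι => hb)
  have hle : topWeight (ι → ℝ) ≤
      #{ S : Set (ι → ℝ) | ∃ (U : ∀ _ : ι, Set ℝ) (F : Finset ι),
        (∀ i, i ∈ F → U i ∈ b) ∧ S = (F : Set ι).pi U } := topWeight_le_of_basis hbasis
  refine hle.trans ?_
  classical
  set g : (Σ F : Finset ι, (↥F → ↥b)) → Set (ι → ℝ) := fun p =>
    ((p.1 : Set ι)).pi (fun i => if h : i ∈ p.1 then (p.2 ⟨i, h⟩ : Set ℝ) else Set.univ) with hg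
  have hsub : { S : Set (ι → ℝ) | ∃ (U : ∀ _ : ι, Set ℝ) (F : Finset ι),
      (∀ i, i ∈ F → U i ∈ b) ∧ S = (F : Set ι).pi U } ⊆ Set.range g := by
    rintro S ⟨U, F, hU, rfl⟩
    refine ⟨⟨F, fun i => ⟨U i.1, hU i.1 i.2⟩⟩, ?_⟩
    show ((F : Set ι)).pi _ = _
    refine Set.pi_congr rfl fun i hi => ?_
    simp [Finset.mem_coe.mp hi]
  calc #{ S : Set (ι → ℝ) | ∃ (U : ∀ _ : ι, Set ℝ) (F : Finset ι),
        (∀ i, i ∈ F → U i ∈ b) ∧ S = (F : Set ι).pi U }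
      ≤ #(Set.range g) := mk_le_mk_of_subset hsub
    _ ≤ #(Σ F : Finset ι, (↥F → ↥b)) := mk_range_le
    _ = sum (fun F : Finset ι => #(↥F → ↥b)) := mk_sigma _
    _ ≤ sum (fun _ : Finset ι => ℵ₀) := Cardinal.sum_le_sum _ _ (fun F => mk_le_aleph0)
    _ = #(Finset ι) * ℵ₀ := sum_const' _ _
    _ ≤ max ℵ₀ #ι * ℵ₀ := by
        gcongr
        rcases finite_or_infinite ι with h | h
        · exact le_max_of_le_left (mk_le_aleph0)
        · exact le_max_of_le_right (mk_finset_of_infinite ι).le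
    _ ≤ max ℵ₀ #ι := by
        rw [Cardinal.mul_eq_max (le_max_left _ _) le_rfl]
        exact max_le le_rfl (le_max_left _ _)

/-- If `K` is a connected compact Hausdorff space of weight at most `κ` which maps
continuously onto every connected compact Hausdorff space of weight at most `κ`, then every real
Banach space of density character at most `κ` embeds linearly isometrically into `C(K, ℝ)`. -/
theorem stmt1 (κ : Cardinal.{u}) (hκ : ℵ₀ ≤ κ)
    (K : Type u) [TopologicalSpace K] [CompactSpace K] [T2Space K]
    [ConnectedSpace K] (hK : topWeight K ≤ κ)
    (huniv : ∀ (L : Type u) [TopologicalSpace L] [CompactSpace L] [T2Space L] [ConnectedSpace L],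
      topWeight L ≤ κ → ∃ f : K → L, Continuous f ∧ Function.Surjective f)
    (X : Type u) [NormedAddCommGroup X] [NormedSpace ℝ X] [CompleteSpace X]
    (hX : densityChar X ≤ κ) :
    Nonempty (X →ₗᵢ[ℝ] C(K, ℝ)) := by
  -- pick a dense set of cardinality at most κ
  have hdne : { c | ∃ s : Set X, Dense s ∧ #s = c }.Nonempty := ⟨_, Set.univ, dense_univ, rfl⟩
  obtain ⟨s, hsdense, hscard⟩ : ∃ s : Set X, Dense s ∧ #s = densityChar X := csInf_mem hdne
  have hscard' : #↥s ≤ κ := hscard ▸ hX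
  -- the dual unit ball with the weak-star topology
  set B : Set (WeakDual ℝ X) := WeakDual.toStrongDual ⁻¹' Metric.closedBall 0 1 with hBdef
  haveI : CompactSpace ↥B := isCompact_iff_compactSpace.mp (WeakDual.isCompact_closedBall (𝕜 := ℝ) 0 1)
  have hBconv : Convex ℝ B :=
    (convex_closedBall (0 : StrongDual ℝ X) 1).linear_preimage WeakDual.toStrongDual.toLinearMap
  have hBmem : ∀ φ : WeakDual ℝ X, φ ∈ B ↔ ‖WeakDual.toStrongDual φ‖ ≤ 1 :=
    fun φ => mem_closedBall_zero_iff
  have h0B : (0 : WeakDual ℝ X) ∈ B := (hBmem 0).mpr (by simp)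
  haveI : ConnectedSpace ↥B := Subtype.connectedSpace (hBconv.isConnected ⟨0, h0B⟩)
  -- the ball embeds into `s → ℝ`, hence has weight at most κ
  let e : ↥B → (↥s → ℝ) := fun φ d => (φ : WeakDual ℝ X) d.1
  have hecont : Continuous e :=
    continuous_pi fun d => (WeakDual.eval_continuous (d : X)).comp continuous_subtype_val
  have heinj : Function.Injective e := by
    intro φ ψ h
    have heq : Set.EqOn (⇑(φ : WeakDual ℝ X)) (⇑(ψ : WeakDual ℝ X)) s :=
      fun x hx => congrFun h ⟨x, hx⟩
    have := Continuous.ext_on hsdense (map_continuous _) (map_continuous _) heq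
    exact Subtype.ext (DFunLike.coe_injective this)
  have hemb := hecont.isClosedEmbedding heinj
  have hwB : topWeight ↥B ≤ κ :=
    (topWeight_le_of_isEmbedding hemb.toIsEmbedding.toIsInducing).trans
      ((topWeight_pi_real ↥s).trans (max_le hκ hscard'))
  obtain ⟨f, hfc, hfs⟩ := huniv ↥B hwB
  -- the embedding `X → C(K, ℝ)`
  let T : X → C(K, ℝ) := fun x =>
    ⟨fun k => ((f k : WeakDual ℝ X)) x,
      (WeakDual.eval_continuous x).comp (continuous_subtype_val.comp hfc)⟩
  refine ⟨⟨⟨⟨T, fun x y => ?_⟩, fun c x => ?_⟩, fun x => ?_⟩⟩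
  · exact ContinuousMap.ext fun k => by simp [T]
  · exact ContinuousMap.ext fun k => by simp [T]
  · apply le_antisymm
    · refine (ContinuousMap.norm_le _ (norm_nonneg x)).mpr fun k => ?_
      have hk : ‖WeakDual.toStrongDual (f k : WeakDual ℝ X)‖ ≤ 1 := (hBmem _).mp (f k).2
      calc ‖(f k : WeakDual ℝ X) x‖
          ≤ ‖WeakDual.toStrongDual (f k : WeakDual ℝ X)‖ * ‖x‖ :=
            ContinuousLinearMap.le_opNorm _ x
        _ ≤ 1 * ‖x‖ := mul_le_mul_of_nonneg_right hk (norm_nonneg x)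
        _ = ‖x‖ := one_mul _
    · obtain ⟨g, hg1, hgx⟩ := exists_dual_vector'' ℝ x
      have hgB : (StrongDual.toWeakDual g) ∈ B := (hBmem _).mpr hg1
      obtain ⟨k, hk⟩ := hfs ⟨_, hgB⟩
      have hval : (T x) k = ‖x‖ := by
        show ((f k : WeakDual ℝ X)) x = ‖x‖
        rw [hk]
        exact hgx
      calc ‖x‖ = ‖(T x) k‖ := by rw [hval, Real.norm_eq_abs, abs_of_nonneg (norm_nonneg x)]
        _ ≤ ‖T x‖ := ContinuousMap.norm_coe_le_norm (T x) k
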